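/- Fix an integer N ≥ 1, g > 0 and Λ > 0. There is a unique a > 0 satisfying Gribov's one-loop gap equation (3Ng²/4) · (2π)^{-4} · ∫_{{x ∈ ℝ⁴ : ‖x‖ ≤ Λ}} dx/(‖x‖⁴ + a) = 1, namely a = Λ⁴ / (exp(128π²/(3Ng²)) − 1). Equivalently, the Gribov parameter γ defined through a = 2Ng²γ⁴ satisfies γ⁴ = Λ⁴ / (2Ng² (exp(128π²/(3Ng²)) − 1)). -/

import Mathlib

open MeasureTheory Real

open Metric Set in

lemma gribov_radial (a Λ : ℝ) (ha : 0 < a) (hΛ : 0 < Λ) :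
    ∫ r in (0:ℝ)..Λ, r ^ 3 / (r ^ 4 + a)
      = 1 / 4 * Real.log ((Λ ^ 4 + a) / a) := by
  have hpos : ∀ r : ℝ, 0 < r ^ 4 + a := fun r => by positivity
  have hderiv : ∀ r ∈ Set.uIcc (0:ℝ) Λ,
      HasDerivAt (fun r => 1 / 4 * Real.log (r ^ 4 + a)) (r ^ 3 / (r ^ 4 + a)) r := by
    intro r _
    have h1 : HasDerivAt (fun r : ℝ => r ^ 4 + a) (4 * r ^ 3) r := by
      simpa using (hasDerivAt_pow 4 r).add_const a
    have := (h1.log (hpos r).ne').const_mul (1/4 : ℝ)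
    convert this using 1
    exacts [rfl, rfl, by ring]
  have hcont : Continuous fun r : ℝ => r ^ 3 / (r ^ 4 + a) :=
    (continuous_pow 3).div ((continuous_pow 4).add continuous_const) fun r => (hpos r).ne'
  rw [intervalIntegral.integral_eq_sub_of_hasDerivAt hderiv (hcont.intervalIntegrable _ _)]
  rw [Real.log_div (by positivity) ha.ne']
  simp
  ring

lemma gribov_integral (a Λ : ℝ) (ha : 0 < a) (hΛ : 0 < Λ) :
    (∫ x in Metric.closedBall (0 : EuclideanSpace ℝ (Fin 4)) Λ, 1 / (‖x‖ ^ 4 + a))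
      = π ^ 2 / 2 * Real.log ((Λ ^ 4 + a) / a) := by
  set f : ℝ → ℝ := Set.indicator (Set.Icc 0 Λ) (fun r => 1 / (r ^ 4 + a)) with hf
  have h1 : (∫ x in Metric.closedBall (0 : EuclideanSpace ℝ (Fin 4)) Λ, 1 / (‖x‖ ^ 4 + a))
      = ∫ x : EuclideanSpace ℝ (Fin 4), f ‖x‖ := by
    rw [← integral_indicator measurableSet_closedBall]
    congr 1
    ext x
    by_cases hx : ‖x‖ ≤ Λ <;>
      simp [hf, Set.indicator_apply, mem_closedBall_zero_iff, hx, norm_nonneg]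
  rw [h1, integral_fun_norm_addHaar volume f]
  have hdim : Module.finrank ℝ (EuclideanSpace ℝ (Fin 4)) = 4 := by simp
  rw [hdim]
  have hvol : (volume (Metric.ball (0 : EuclideanSpace ℝ (Fin 4)) 1)).toReal = π ^ 2 / 2 := by
    rw [EuclideanSpace.volume_ball]
    have hΓ : Real.Gamma ((Fintype.card (Fin 4) : ℝ) / 2 + 1) = 2 := by
      norm_num
    have hs : Real.sqrt π ^ Fintype.card (Fin 4) = π ^ 2 := by
      rw [show Fintype.card (Fin 4) = 4 from rfl,
        show (Real.sqrt π) ^ 4 = (Real.sqrt π ^ 2) ^ 2 by ring, Real.sq_sqrt pi_pos.le]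
    rw [hΓ, hs]
    simp [ENNReal.toReal_ofReal (by positivity : (0:ℝ) ≤ π ^ 2 / 2)]
  rw [measureReal_def, hvol]
  have h2 : (∫ y in Set.Ioi (0:ℝ), y ^ (4 - 1) • f y) = ∫ r in (0:ℝ)..Λ, r ^ 3 / (r ^ 4 + a) := by
    have : ∀ y : ℝ, y ^ 3 • f y = Set.indicator (Set.Icc 0 Λ) (fun r => r ^ 3 / (r ^ 4 + a)) y := by
      intro y
      by_cases hy : y ∈ Set.Icc (0:ℝ) Λ <;>
        simp [hf, Set.indicator_apply, hy, smul_eq_mul, div_eq_mul_inv, mul_comm]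
    simp only [show (4-1 : ℕ) = 3 from rfl, this]
    rw [integral_indicator measurableSet_Icc, Measure.restrict_restrict measurableSet_Icc,
      show Set.Icc (0:ℝ) Λ ∩ Set.Ioi 0 = Set.Ioc 0 Λ by
        ext y
        simp only [Set.mem_inter_iff, Set.mem_Icc, Set.mem_Ioi, Set.mem_Ioc]
        constructor
        · rintro ⟨⟨_, h2⟩, h3⟩; exact ⟨h3, h2⟩
        · rintro ⟨h1, h2⟩; exact ⟨⟨h1.le, h2⟩, h1⟩,
      intervalIntegral.integral_of_le hΛ.le]
  rw [h2, gribov_radial a Λ ha hΛ]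
  simp [nsmul_eq_mul, smul_eq_mul]
  ring

/-- Gribov's one-loop gap equation
`(3Ng²/4)·(2π)⁻⁴·∫_{‖x‖ ≤ Λ} dx/(‖x‖⁴ + a) = 1` has a unique solution `a > 0`, namely
`a = Λ⁴/(exp(128π²/(3Ng²)) − 1)`; equivalently the Gribov parameter `γ` defined through
`a = 2Ng²γ⁴` satisfies `γ⁴ = Λ⁴/(2Ng²(exp(128π²/(3Ng²)) − 1))`. -/
theorem gribov_gap_equation_unique_solution (N : ℕ) (hN : 1 ≤ N) (g Λ : ℝ)
    (hg : 0 < g) (hΛ : 0 < Λ) :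
    (0 < Λ ^ 4 / (Real.exp (128 * π ^ 2 / (3 * N * g ^ 2)) - 1)
      ∧ (3 * N * g ^ 2 / 4) * ((2 * π) ^ 4)⁻¹
          * ∫ x in Metric.closedBall (0 : EuclideanSpace ℝ (Fin 4)) Λ,
              1 / (‖x‖ ^ 4 + Λ ^ 4 / (Real.exp (128 * π ^ 2 / (3 * N * g ^ 2)) - 1)) = 1)
    ∧ (∀ a : ℝ, 0 < a →
        (3 * N * g ^ 2 / 4) * ((2 * π) ^ 4)⁻¹
            * ∫ x in Metric.closedBall (0 : EuclideanSpace ℝ (Fin 4)) Λ,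
                1 / (‖x‖ ^ 4 + a) = 1 →
        a = Λ ^ 4 / (Real.exp (128 * π ^ 2 / (3 * N * g ^ 2)) - 1))
    ∧ (∀ γ : ℝ,
        Λ ^ 4 / (Real.exp (128 * π ^ 2 / (3 * N * g ^ 2)) - 1) = 2 * N * g ^ 2 * γ ^ 4 →
        γ ^ 4 = Λ ^ 4 / (2 * N * g ^ 2 * (Real.exp (128 * π ^ 2 / (3 * N * g ^ 2)) - 1))) := by
  have hN' : (0:ℝ) < N := by exact_mod_cast Nat.lt_of_lt_of_le Nat.zero_lt_one hN
  have h3 : (0:ℝ) < 3 * N * g ^ 2 := by positivity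
  set c : ℝ := 128 * π ^ 2 / (3 * N * g ^ 2) with hc
  have hcpos : 0 < c := by positivity
  set E : ℝ := Real.exp c with hE
  have hE1 : 0 < E - 1 := by
    have : (1:ℝ) < E := by
      rw [hE, show (1:ℝ) = Real.exp 0 from (Real.exp_zero).symm]
      exact Real.exp_lt_exp.mpr hcpos
    linarith
  set a0 : ℝ := Λ ^ 4 / (E - 1) with ha0
  have ha0pos : 0 < a0 := by positivity
  have hfrac : (Λ ^ 4 + a0) / a0 = E := by
    rw [ha0]
    field_simp
    ring
  have hπ : (0:ℝ) < π := pi_pos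
  refine ⟨⟨ha0pos, ?_⟩, ?_, ?_⟩
  · rw [gribov_integral a0 Λ ha0pos hΛ, hfrac, hE, Real.log_exp, hc]
    field_simp
    ring
  · intro a ha heq
    rw [gribov_integral a Λ ha hΛ] at heq
    set L : ℝ := Real.log ((Λ ^ 4 + a) / a) with hLdef
    have hK : (3 * ↑N * g ^ 2 / 4) * ((2 * π) ^ 4)⁻¹ * (π ^ 2 / 2 * L)
        = 3 * ↑N * g ^ 2 / (128 * π ^ 2) * L := by
      field_simp
      ring
    rw [hK] at heq
    have hL : L = c := by
      rw [hc]
      field_simp at heq ⊢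
      linarith
    have h4 : (Λ ^ 4 + a) / a = E := by
      rw [hE, ← hL, Real.exp_log (by positivity)]
    have h5 : Λ ^ 4 + a = E * a := (div_eq_iff ha.ne').mp h4
    rw [ha0, eq_div_iff hE1.ne']
    linarith
  · intro γ hγ
    have h2 : (0:ℝ) < 2 * N * g ^ 2 := by positivity
    rw [eq_div_iff (by positivity : (2 * N * g ^ 2 * (E - 1)) ≠ 0)]
    rw [ha0] at hγ
    field_simp at hγ
    linarith [hγ]
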